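/- Let H be a separable Hilbert space, Ψ* : H × H → ℝ a dissipation potential (strictly convex in the second argument, with inf over ξ attained at ξ = 0 with value 0, twice continuously Gâteaux differentiable in ξ), F : H → ℝ twice continuously Gâteaux differentiable, A : H → H bounded linear, and π ∈ H with DF(π) = 0. If A x = D_ξΨ*(x, -DF(x)) for all x ∈ H, then A = -D²_ξΨ*(π, 0) ∘ D²F(π); i.e. A x = -K̂ DF̂(x) for the canonical gradient system with K̂ := D²_ξΨ*(π, 0) (a positive semidefinite symmetric operator) and F̂(x) := ½⟨D²F(π)x, x⟩. -/

import Mathlib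

open RealInnerProductSpace

theorem generalised_to_canonical_gradient_system
    {H : Type*} [NormedAddCommGroup H] [InnerProductSpace ℝ H] [CompleteSpace H]
    [TopologicalSpace.SeparableSpace H]
    (Psi : H → H → ℝ)                  -- dissipation potential Ψ*(x, ξ)
    (DxiPsi : H → H → H)               -- ξ-Gâteaux gradient of Ψ*
    (F : H → ℝ) (DF : H → H)           -- free energy and its Gâteaux gradient
    (A : H →L[ℝ] H) (π : H)
    (L : H × H →L[ℝ] H)                -- total derivative of (x, ξ) ↦ D_ξΨ*(x, ξ) at (π, 0)
    (Khat Bhat : H →L[ℝ] H)            -- K̂ = D²_ξΨ*(π,0), B̂ = D²F(π)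
    -- Ψ* is a dissipation potential:
    (hstrict : ∀ x : H, StrictConvexOn ℝ Set.univ (Psi x))
    (hzero : ∀ x : H, Psi x 0 = 0)
    (hmin : ∀ x ξ : H, Psi x 0 ≤ Psi x ξ)
    (hgrad : ∀ x ξ v : H, HasLineDerivAt ℝ (Psi x) ⟪DxiPsi x ξ, v⟫ ξ v)
    -- second derivative data at (π, 0):
    (hDeriv : HasFDerivAt (fun p : H × H => DxiPsi p.1 p.2) L (π, 0))
    (hKhat : ∀ v : H, L (0, v) = Khat v)
    (hKhatsa : IsSelfAdjoint Khat)
    (hKhatpos : ∀ v : H, 0 ≤ ⟪Khat v, v⟫)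
    -- F: Gâteaux gradient DF, twice differentiable at π with second derivative B̂:
    (hFgrad : ∀ x v : H, HasLineDerivAt ℝ F ⟪DF x, v⟫ x v)
    (hBhat : HasFDerivAt DF Bhat π)
    (hBhatsa : IsSelfAdjoint Bhat)
    -- equilibrium and gradient-flow structure:
    (hpi : DF π = 0)
    (hA : ∀ x : H, A x = DxiPsi x (-DF x)) :
    ∀ x : H, A x = -(Khat (Bhat x)) := by
  -- Step 1: DxiPsi x 0 = 0 for every x (gradient at the minimum vanishes)
  have hD0 : ∀ x : H, DxiPsi x 0 = 0 := by
    intro x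
    have hv : ∀ v : H, ⟪DxiPsi x 0, v⟫ = 0 := by
      intro v
      have h1 : HasDerivAt (fun t : ℝ => Psi x ((0 : H) + t • v)) ⟪DxiPsi x 0, v⟫ 0 :=
        hgrad x 0 v
      have hlm : IsLocalMin (fun t : ℝ => Psi x ((0 : H) + t • v)) 0 :=
        Filter.Eventually.of_forall (fun t => by simpa using hmin x (t • v))
      exact hlm.hasDerivAt_eq_zero h1
    have := hv (DxiPsi x 0)
    rwa [real_inner_self_eq_norm_sq, pow_eq_zero_iff (by norm_num), norm_eq_zero] at this
  -- Step 2: L (v, 0) = 0, by differentiating x ↦ DxiPsi x 0 = 0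
  have hL0 : ∀ v : H, L (v, 0) = 0 := by
    intro v
    have hinl : HasFDerivAt (fun x : H => ((x, (0 : H)) : H × H))
        (ContinuousLinearMap.inl ℝ H H) π := (ContinuousLinearMap.inl ℝ H H).hasFDerivAt
    have hcomp : HasFDerivAt (fun x : H => DxiPsi x 0)
        (L.comp (ContinuousLinearMap.inl ℝ H H)) π := by have := hDeriv.comp π hinl; exact this
    have hzeroF : HasFDerivAt (fun _ : H => (0 : H)) (0 : H →L[ℝ] H) π := by
      simpa using (hasFDerivAt_const (0 : H) π)
    have hfun : (fun x : H => DxiPsi x 0) = fun _ : H => (0 : H) := funext hD0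
    rw [hfun] at hcomp
    have := hcomp.unique hzeroF
    calc L (v, 0) = (L.comp (ContinuousLinearMap.inl ℝ H H)) v := rfl
      _ = (0 : H →L[ℝ] H) v := by rw [this]
      _ = 0 := rfl
  -- Step 3: differentiate x ↦ DxiPsi x (-DF x) = A x at π
  have hg : HasFDerivAt (fun x : H => ((x, -DF x) : H × H))
      ((ContinuousLinearMap.id ℝ H).prod (-Bhat)) π :=
    HasFDerivAt.prodMk (hasFDerivAt_id π) hBhat.neg
  have hgpi : ((π, -DF π) : H × H) = (π, 0) := by rw [hpi]; simp
  have hDeriv' : HasFDerivAt (fun p : H × H => DxiPsi p.1 p.2) L (π, -DF π) := by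
    rw [hgpi]; exact hDeriv
  have hchain : HasFDerivAt (fun x : H => DxiPsi x (-DF x))
      (L.comp ((ContinuousLinearMap.id ℝ H).prod (-Bhat))) π :=
    by have := hDeriv'.comp π hg; exact this
  have hAfun : (fun x : H => DxiPsi x (-DF x)) = fun x : H => A x := by
    funext x; exact (hA x).symm
  rw [hAfun] at hchain
  have hAder : HasFDerivAt (fun x : H => A x) (A : H →L[ℝ] H) π := A.hasFDerivAt
  have hEq : A = L.comp ((ContinuousLinearMap.id ℝ H).prod (-Bhat)) :=
    hAder.unique hchain
  intro x
  have : A x = L (x, -Bhat x) := by rw [hEq]; rfl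
  rw [this]
  have hsplit : ((x, -Bhat x) : H × H) = (x, 0) + (0, -Bhat x) := by simp
  rw [hsplit, map_add, hL0, hKhat, zero_add, map_neg]
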